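/- Let H ∈ ℝ^{3×3} and let p, q ∈ ℝ² with w_H(p) > 0 and w_H(q) > 0. Then the homography f_H maps the closed segment [p, q] onto the closed segment [f_H(p), f_H(q)]: f_H '' (segment ℝ p q) = segment ℝ (f_H p) (f_H q). -/

import Mathlib

/-- The cross value of three points in the plane: the z-coordinate of the
cross product `(b - a) × (c - b)`. -/
noncomputable def cross (a b c : ℝ × ℝ) : ℝ :=
  (b.1 - a.1) * (c.2 - b.2) - (b.2 - a.2) * (c.1 - b.1)

/-- The lift of a planar point `(x, y)` to `(x, y, 1) ∈ ℝ³`. -/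
noncomputable def liftPt (p : ℝ × ℝ) : Fin 3 → ℝ := ![p.1, p.2, 1]

/-- The homography denominator: the third coordinate of `H ℓ(p)`. -/
noncomputable def wH (H : Matrix (Fin 3) (Fin 3) ℝ) (p : ℝ × ℝ) : ℝ :=
  H.mulVec (liftPt p) 2

/-- The planar homography induced by the matrix `H`. -/
noncomputable def fH (H : Matrix (Fin 3) (Fin 3) ℝ) (p : ℝ × ℝ) : ℝ × ℝ :=
  (H.mulVec (liftPt p) 0 / wH H p, H.mulVec (liftPt p) 1 / wH H p)

lemma liftPt_comb (p q : ℝ × ℝ) (a b : ℝ) (hab : a + b = 1) :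
    liftPt (a • p + b • q) = a • liftPt p + b • liftPt q := by
  funext i
  fin_cases i <;> simp [liftPt, Prod.smul_def] <;> linarith

lemma mulVec_comb (H : Matrix (Fin 3) (Fin 3) ℝ) (p q : ℝ × ℝ) (a b : ℝ) (hab : a + b = 1) :
    H.mulVec (liftPt (a • p + b • q)) = a • H.mulVec (liftPt p) + b • H.mulVec (liftPt q) := by
  rw [liftPt_comb p q a b hab, Matrix.mulVec_add, Matrix.mulVec_smul, Matrix.mulVec_smul]

lemma wH_comb (H : Matrix (Fin 3) (Fin 3) ℝ) (p q : ℝ × ℝ) (a b : ℝ) (hab : a + b = 1) :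
    wH H (a • p + b • q) = a * wH H p + b * wH H q := by
  simp [wH, mulVec_comb H p q a b hab]

lemma fH_comb (H : Matrix (Fin 3) (Fin 3) ℝ) (p q : ℝ × ℝ) (a b : ℝ) (hab : a + b = 1)
    (hwp : wH H p ≠ 0) (hwq : wH H q ≠ 0) (hD : a * wH H p + b * wH H q ≠ 0) :
    fH H (a • p + b • q) =
      ((a * wH H p) / (a * wH H p + b * wH H q)) • fH H p +
      ((b * wH H q) / (a * wH H p + b * wH H q)) • fH H q := by
  have hm := mulVec_comb H p q a b hab
  have hw := wH_comb H p q a b hab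
  unfold fH
  rw [hw, hm]
  ext <;> simp [Prod.smul_def, smul_eq_mul] <;> field_simp <;> ring

theorem fH_image_segment (H : Matrix (Fin 3) (Fin 3) ℝ) (p q : ℝ × ℝ)
    (hp : 0 < wH H p) (hq : 0 < wH H q) :
    fH H '' segment ℝ p q = segment ℝ (fH H p) (fH H q) := by
  ext z
  constructor
  · rintro ⟨y, ⟨a, b, ha, hb, hab, rfl⟩, rfl⟩
    have hD : 0 < a * wH H p + b * wH H q := by
      rcases ha.lt_or_eq with h | h
      · have := mul_pos h hp
        nlinarith [mul_nonneg hb hq.le]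
      · have hb1 : b = 1 := by linarith
        simp [← h, hb1, hq]
    refine ⟨a * wH H p / (a * wH H p + b * wH H q),
            b * wH H q / (a * wH H p + b * wH H q), ?_, ?_, ?_, ?_⟩
    · positivity
    · positivity
    · field_simp
    · exact (fH_comb H p q a b hab hp.ne' hq.ne' hD.ne').symm
  · rintro ⟨a, b, ha, hb, hab, rfl⟩
    have hS : 0 < a / wH H p + b / wH H q := by
      rcases ha.lt_or_eq with h | h
      · have := div_pos h hp
        have : 0 ≤ b / wH H q := by positivity
        positivity
      · have hb1 : b = 1 := by linarith
        simp [← h, hb1]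
        positivity
    set S := a / wH H p + b / wH H q with hSdef
    set a0 := (a / wH H p) / S with ha0
    set b0 := (b / wH H q) / S with hb0
    have ha0n : 0 ≤ a0 := by positivity
    have hb0n : 0 ≤ b0 := by positivity
    have hab0 : a0 + b0 = 1 := by
      rw [ha0, hb0, ← add_div, ← hSdef]
      exact div_self hS.ne'
    have ea : a0 * wH H p = a / S := by
      rw [ha0]; field_simp
    have eb : b0 * wH H q = b / S := by
      rw [hb0]; field_simp
    have hD : a0 * wH H p + b0 * wH H q = 1 / S := by
      rw [ea, eb, ← add_div, hab]
    have hDne : a0 * wH H p + b0 * wH H q ≠ 0 := by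
      rw [hD]; positivity
    refine ⟨a0 • p + b0 • q, ⟨a0, b0, ha0n, hb0n, hab0, rfl⟩, ?_⟩
    rw [fH_comb H p q a0 b0 hab0 hp.ne' hq.ne' hDne, hD]
    have e1 : a0 * wH H p / (1 / S) = a := by
      rw [ha0]; field_simp
    have e2 : b0 * wH H q / (1 / S) = b := by
      rw [hb0]; field_simp
    rw [e1, e2]
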